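/- Let λ* = (λ₁*,…,λ₆*) ∈ ℂ⁶ satisfy λ₁* = λ₂* = λ₅* = 0, λ₃* ≠ λ₆*, λ₄* ≠ 0, and assume either λ₄* + 5λ₃* − 5λ₆* ≠ 0 or λ₃*λ₆* − 2λ₆*² ≠ 0 (i.e. λ* is a smooth point of the center set lying on I₂ only). Then the ideal of ℂ[λ₁,…,λ₆] generated by the Kapteyn–Bautin polynomials v₁, v₂, v₃, v₄ and the ideal generated by λ₁, λ₂, λ₅ coincide locally at λ*. -/

import Mathlib

open MvPolynomial

/-- The multiplicative set of polynomials not vanishing at `p`, i.e. the complement of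
the maximal ideal of polynomials vanishing at `p`. -/
def nonVanishing (K : Type*) [Field K] (p : Fin 6 → K) :
    Submonoid (MvPolynomial (Fin 6) K) where
  carrier := {f | eval p f ≠ 0}
  mul_mem' := by
    intro a b ha hb
    simp only [Set.mem_setOf_eq, map_mul] at ha hb ⊢
    exact mul_ne_zero ha hb
  one_mem' := by simp

/-- Two ideals of `K[λ₁,…,λ₆]` coincide locally at `p` if their extensions to the
localization of the polynomial ring at the maximal ideal of polynomials vanishing at `p`
(equivalently, the localization inverting all polynomials not vanishing at `p`) are equal. -/
def coincideLocally (K : Type*) [Field K] (p : Fin 6 → K)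
    (I J : Ideal (MvPolynomial (Fin 6) K)) : Prop :=
  Ideal.map (algebraMap (MvPolynomial (Fin 6) K) (Localization (nonVanishing K p))) I =
  Ideal.map (algebraMap (MvPolynomial (Fin 6) K) (Localization (nonVanishing K p))) J

/-- The Bautin ideal of the Kapteyn normal form, generated by the Kapteyn–Bautin
polynomials `v₁ = λ₁`, `v₂ = λ₅(λ₃−λ₆)`, `v₃ = λ₂λ₄(λ₃−λ₆)(λ₄+5λ₃−5λ₆)`,
`v₄ = λ₂λ₄(λ₃−λ₆)²(λ₃λ₆−2λ₆²−λ₂²)`, where `X 0 = λ₁, …, X 5 = λ₆`. -/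
noncomputable def bautinIdeal (K : Type*) [Field K] : Ideal (MvPolynomial (Fin 6) K) :=
  Ideal.span {X 0, X 4 * (X 2 - X 5),
    X 1 * X 3 * (X 2 - X 5) * (X 3 + 5 * X 2 - 5 * X 5),
    X 1 * X 3 * (X 2 - X 5) ^ 2 * (X 2 * X 5 - 2 * X 5 ^ 2 - X 1 ^ 2)}

lemma vec5 {α : Type*} (a b c d e f : α) : ![a,b,c,d,e,f] 5 = f := rfl

/-- If `a * u ∈ I` with `u` not vanishing at `p`, then `a` lies in the extension of `I`
to the localization at `p`, since `u` becomes a unit there. -/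
lemma mem_map_of_mul_unit_mem (p : Fin 6 → ℂ) (I : Ideal (MvPolynomial (Fin 6) ℂ))
    (a u : MvPolynomial (Fin 6) ℂ) (hu : eval p u ≠ 0) (h : a * u ∈ I) :
    algebraMap (MvPolynomial (Fin 6) ℂ) (Localization (nonVanishing ℂ p)) a ∈
      Ideal.map (algebraMap (MvPolynomial (Fin 6) ℂ) (Localization (nonVanishing ℂ p))) I := by
  set φ := algebraMap (MvPolynomial (Fin 6) ℂ) (Localization (nonVanishing ℂ p))
  have hun : IsUnit (φ u) :=
    IsLocalization.map_units (Localization (nonVanishing ℂ p)) (⟨u, hu⟩ : nonVanishing ℂ p)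
  obtain ⟨v, hv⟩ := hun
  have : φ a = φ (a * u) * ↑v⁻¹ := by
    rw [map_mul, ← hv, mul_assoc, Units.mul_inv, mul_one]
  rw [this]
  exact Ideal.mul_mem_right _ _ (Ideal.mem_map_of_mem φ h)

/-- at a smooth point `λ*` of the center set lying on `I₂` only
(`λ₁* = λ₂* = λ₅* = 0`, `λ₃* ≠ λ₆*`, `λ₄* ≠ 0`, and `λ₄*+5λ₃*−5λ₆* ≠ 0` or
`λ₃*λ₆*−2λ₆*² ≠ 0`), the Bautin ideal coincides locally at `λ*` with the ideal
`(λ₁, λ₂, λ₅)`. -/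
theorem stmt_5 (l1 l2 l3 l4 l5 l6 : ℂ)
    (h1 : l1 = 0) (h2 : l2 = 0) (h5 : l5 = 0)
    (h36 : l3 ≠ l6) (h4 : l4 ≠ 0)
    (hsmooth : l4 + 5 * l3 - 5 * l6 ≠ 0 ∨ l3 * l6 - 2 * l6 ^ 2 ≠ 0) :
    coincideLocally ℂ ![l1, l2, l3, l4, l5, l6]
      (bautinIdeal ℂ)
      (Ideal.span {X 0, X 1, X 4}) := by
  set p : Fin 6 → ℂ := ![l1, l2, l3, l4, l5, l6]
  set φ := algebraMap (MvPolynomial (Fin 6) ℂ) (Localization (nonVanishing ℂ p))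
  have hX0 : (X 0 : MvPolynomial (Fin 6) ℂ) ∈ Ideal.span {X 0, X 1, X 4} :=
    Ideal.subset_span (by simp)
  have hX1 : (X 1 : MvPolynomial (Fin 6) ℂ) ∈ Ideal.span {X 0, X 1, X 4} :=
    Ideal.subset_span (by simp)
  have hX4 : (X 4 : MvPolynomial (Fin 6) ℂ) ∈ Ideal.span {X 0, X 1, X 4} :=
    Ideal.subset_span (by simp)
  apply le_antisymm
  · -- each Bautin generator already lies in (X0, X1, X4)
    apply Ideal.map_mono
    rw [bautinIdeal, Ideal.span_le]
    rintro f (rfl | rfl | rfl | rfl)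
    · exact hX0
    · exact Ideal.mul_mem_right _ _ hX4
    · exact Ideal.mul_mem_right _ _ (Ideal.mul_mem_right _ _ (Ideal.mul_mem_right _ _ hX1))
    · exact Ideal.mul_mem_right _ _ (Ideal.mul_mem_right _ _ (Ideal.mul_mem_right _ _ hX1))
  · rw [Ideal.map_le_iff_le_comap, Ideal.span_le]
    have g1 : (X 0 : MvPolynomial (Fin 6) ℂ) ∈ bautinIdeal ℂ := Ideal.subset_span (by simp)
    have g2 : (X 4 * (X 2 - X 5) : MvPolynomial (Fin 6) ℂ) ∈ bautinIdeal ℂ :=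
      Ideal.subset_span (by simp)
    have g3 : (X 1 * X 3 * (X 2 - X 5) * (X 3 + 5 * X 2 - 5 * X 5) :
        MvPolynomial (Fin 6) ℂ) ∈ bautinIdeal ℂ := Ideal.subset_span (by simp)
    have g4 : (X 1 * X 3 * (X 2 - X 5) ^ 2 * (X 2 * X 5 - 2 * X 5 ^ 2 - X 1 ^ 2) :
        MvPolynomial (Fin 6) ℂ) ∈ bautinIdeal ℂ := Ideal.subset_span (by simp)
    have e36 : l3 - l6 ≠ 0 := sub_ne_zero.mpr h36
    rintro f (rfl | rfl | rfl) <;> simp only [SetLike.mem_coe, Ideal.mem_comap]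
    · -- X 0
      exact Ideal.mem_map_of_mem φ g1
    · -- X 1
      rcases hsmooth with hs | hs
      · refine mem_map_of_mul_unit_mem p _ (X 1)
          (X 3 * ((X 2 - X 5) * (X 3 + 5 * X 2 - 5 * X 5))) ?_ ?_
        · have : eval p (X 3 * ((X 2 - X 5) * (X 3 + 5 * X 2 - 5 * X 5)) :
              MvPolynomial (Fin 6) ℂ) = l4 * ((l3 - l6) * (l4 + 5 * l3 - 5 * l6)) := by
            simp [p, vec5]
          rw [this]
          exact mul_ne_zero h4 (mul_ne_zero e36 hs)
        · have : (X 1 * (X 3 * ((X 2 - X 5) * (X 3 + 5 * X 2 - 5 * X 5))) :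
              MvPolynomial (Fin 6) ℂ) =
              X 1 * X 3 * (X 2 - X 5) * (X 3 + 5 * X 2 - 5 * X 5) := by ring
          rw [this]; exact g3
      · refine mem_map_of_mul_unit_mem p _ (X 1)
          (X 3 * ((X 2 - X 5) ^ 2 * (X 2 * X 5 - 2 * X 5 ^ 2 - X 1 ^ 2))) ?_ ?_
        · have : eval p (X 3 * ((X 2 - X 5) ^ 2 * (X 2 * X 5 - 2 * X 5 ^ 2 - X 1 ^ 2)) :
              MvPolynomial (Fin 6) ℂ) = l4 * ((l3 - l6) ^ 2 * (l3 * l6 - 2 * l6 ^ 2)) := by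
            simp [p, vec5, h1]
            exact Or.inl (Or.inl h2)
          rw [this]
          exact mul_ne_zero h4 (mul_ne_zero (pow_ne_zero _ e36) hs)
        · have : (X 1 * (X 3 * ((X 2 - X 5) ^ 2 * (X 2 * X 5 - 2 * X 5 ^ 2 - X 1 ^ 2))) :
              MvPolynomial (Fin 6) ℂ) =
              X 1 * X 3 * (X 2 - X 5) ^ 2 * (X 2 * X 5 - 2 * X 5 ^ 2 - X 1 ^ 2) := by ring
          rw [this]; exact g4
    · -- X 4
      refine mem_map_of_mul_unit_mem p _ (X 4) (X 2 - X 5) ?_ g2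
      have : eval p (X 2 - X 5 : MvPolynomial (Fin 6) ℂ) = l3 - l6 := by simp [p, vec5]
      rw [this]; exact e36
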